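/- Let K' be a profunctor from C' to D', K a profunctor from C to D, and (p, q, φ) a strict morphism from K' to K, i.e. functors p : C' ⥤ C, q : D' ⥤ D and functions φ : K'(c',d') → K(p.obj c', q.obj d') natural in c' and d'. Then (C', D', K', p, q, φ) is a discrete opfibration over K if and only if the induced collage functor Coll(K') ⥤ Coll(K) — acting by p on C'-objects and C'-morphisms, by q on D'-objects and D'-morphisms, and by φ on heteromorphisms — is a discrete opfibration of categories. -/

import Mathlib

open CategoryTheory Opposite

universe u

variable {C D : Type u} [Category.{u} C] [Category.{u} D]

/-- The objects of the collage of a profunctor `K` from `C` to `D`: the disjoint union of the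
objects of `C` and of `D`. -/
def Collage (K : Cᵒᵖ × D ⥤ Type u) : Type u := C ⊕ D

/-- The hom-sets of the collage of `K`. -/
def CollageHom (K : Cᵒᵖ × D ⥤ Type u) : Collage K → Collage K → Type u
  | Sum.inl c, Sum.inl c' => c ⟶ c'
  | Sum.inl c, Sum.inr d => K.obj (op c, d)
  | Sum.inr _, Sum.inl _ => PEmpty
  | Sum.inr d, Sum.inr d' => d ⟶ d'

/-- Identities in the collage. -/
def collageId (K : Cᵒᵖ × D ⥤ Type u) : ∀ x : Collage K, CollageHom K x x
  | Sum.inl c => (𝟙 c : c ⟶ c)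
  | Sum.inr d => (𝟙 d : d ⟶ d)

/-- Composition in the collage, given by composition in `C` and `D` and the two-sided action
of `C` and `D` on `K`. -/
def collageComp (K : Cᵒᵖ × D ⥤ Type u) :
    ∀ {x y z : Collage K}, CollageHom K x y → CollageHom K y z → CollageHom K x z
  | Sum.inl _, Sum.inl _, Sum.inl _, f, g => (f ≫ g : _ ⟶ _)
  | Sum.inl c, Sum.inl c', Sum.inr d, f, k =>
      (K.map (Quiver.Hom.op (X := c) (Y := c') f, 𝟙 d) k : K.obj (op c, d))
  | Sum.inl c, Sum.inr d, Sum.inr d', k, g =>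
      (K.map (X := (op c, d)) (Y := (op c, d')) (𝟙 (op c), (g : d ⟶ d')) k : K.obj (op c, d'))
  | Sum.inl _, Sum.inr _, Sum.inl _, _, g => (g : PEmpty).elim
  | Sum.inr _, Sum.inl _, _, f, _ => (f : PEmpty).elim
  | Sum.inr _, Sum.inr _, Sum.inl _, _, g => (g : PEmpty).elim
  | Sum.inr _, Sum.inr _, Sum.inr _, f, g => (f ≫ g : _ ⟶ _)

theorem collage_id_comp (K : Cᵒᵖ × D ⥤ Type u) :
    ∀ {x y : Collage K} (f : CollageHom K x y),
      collageComp K (collageId K x) f = f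
  | Sum.inl _, Sum.inl _, f => Category.id_comp f
  | Sum.inl c, Sum.inr d, k => by
      change K.obj (op c, d) at k
      simp [collageComp, collageId]
      exact FunctorToTypes.map_id_apply K k
  | Sum.inr _, Sum.inl _, f => (f : PEmpty).elim
  | Sum.inr _, Sum.inr _, f => Category.id_comp f

theorem collage_comp_id (K : Cᵒᵖ × D ⥤ Type u) :
    ∀ {x y : Collage K} (f : CollageHom K x y),
      collageComp K f (collageId K y) = f
  | Sum.inl _, Sum.inl _, f => Category.comp_id f
  | Sum.inl c, Sum.inr d, k => by
      change K.obj (op c, d) at k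
      simp [collageComp, collageId]
      exact FunctorToTypes.map_id_apply K k
  | Sum.inr _, Sum.inl _, f => (f : PEmpty).elim
  | Sum.inr _, Sum.inr _, f => Category.comp_id f

theorem collage_assoc (K : Cᵒᵖ × D ⥤ Type u) :
    ∀ {w x y z : Collage K} (f : CollageHom K w x) (g : CollageHom K x y)
      (h : CollageHom K y z),
      collageComp K (collageComp K f g) h = collageComp K f (collageComp K g h)
  | Sum.inl _, Sum.inl _, Sum.inl _, Sum.inl _, f, g, h => Category.assoc f g h
  | Sum.inl c₁, Sum.inl c₂, Sum.inl c₃, Sum.inr d, f, g, k => by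
      change c₁ ⟶ c₂ at f; change c₂ ⟶ c₃ at g; change K.obj (op c₃, d) at k
      simp [collageComp]
      simp only [← FunctorToTypes.map_comp_apply, prod_comp, Category.id_comp, Category.comp_id]
      rfl
  | Sum.inl _, Sum.inl _, Sum.inr _, Sum.inl _, _, _, h => (h : PEmpty).elim
  | Sum.inl c₁, Sum.inl c₂, Sum.inr d₁, Sum.inr d₂, f, k, g => by
      change c₁ ⟶ c₂ at f; change K.obj (op c₂, d₁) at k; change d₁ ⟶ d₂ at g
      simp [collageComp]
      simp only [← FunctorToTypes.map_comp_apply, prod_comp, Category.id_comp, Category.comp_id]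
      rfl
  | Sum.inl _, Sum.inr _, Sum.inl _, _, _, g, _ => (g : PEmpty).elim
  | Sum.inl _, Sum.inr _, Sum.inr _, Sum.inl _, _, _, h => (h : PEmpty).elim
  | Sum.inl c, Sum.inr d₁, Sum.inr d₂, Sum.inr d₃, k, g, h => by
      change K.obj (op c, d₁) at k; change d₁ ⟶ d₂ at g; change d₂ ⟶ d₃ at h
      simp [collageComp]
      simp only [← FunctorToTypes.map_comp_apply, prod_comp, Category.id_comp, Category.comp_id]
      rfl
  | Sum.inr _, Sum.inl _, _, _, f, _, _ => (f : PEmpty).elim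
  | Sum.inr _, Sum.inr _, Sum.inl _, _, _, g, _ => (g : PEmpty).elim
  | Sum.inr _, Sum.inr _, Sum.inr _, Sum.inl _, _, _, h => (h : PEmpty).elim
  | Sum.inr _, Sum.inr _, Sum.inr _, Sum.inr _, f, g, h => Category.assoc f g h

/-- The collage of a profunctor `K` from `C` to `D`. -/
instance collageCategory (K : Cᵒᵖ × D ⥤ Type u) : Category.{u} (Collage K) where
  Hom x y := CollageHom K x y
  id x := collageId K x
  comp f g := collageComp K f g
  id_comp f := collage_id_comp K f
  comp_id f := collage_comp_id K f
  assoc f g h := collage_assoc K f g h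

/-- A functor `p : E ⥤ B` is a discrete opfibration if every morphism out of the image of an
object `e` has a unique lift with domain `e`. -/
def IsDiscreteOpfib {E : Type*} {B : Type*} [Category E] [Category B] (p : E ⥤ B) : Prop :=
  ∀ ⦃e : E⦄ ⦃b : B⦄ (f : p.obj e ⟶ b),
    ∃! eg : Σ e' : E, e ⟶ e',
      ∃ h : p.obj eg.1 = b, p.map eg.2 ≫ eqToHom h = f

section CollageMap

variable {C' D' : Type u} [Category.{u} C'] [Category.{u} D']
variable (K' : C'ᵒᵖ × D' ⥤ Type u) (K : Cᵒᵖ × D ⥤ Type u)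
variable (p : C' ⥤ C) (q : D' ⥤ D)

/-- The object part of the collage functor induced by a strict morphism of profunctors. -/
def collageMapObj : Collage K' → Collage K
  | Sum.inl c' => Sum.inl (p.obj c')
  | Sum.inr d' => Sum.inr (q.obj d')

variable (φ : ∀ (c' : C') (d' : D'), K'.obj (op c', d') → K.obj (op (p.obj c'), q.obj d'))

/-- The morphism part of the collage functor induced by a strict morphism of profunctors. -/
def collageMapMap : ∀ {x y : Collage K'}, CollageHom K' x y →
    CollageHom K (collageMapObj K' K p q x) (collageMapObj K' K p q y)
  | Sum.inl a, Sum.inl b, f => (p.map (f : a ⟶ b) : p.obj a ⟶ p.obj b)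
  | Sum.inl c', Sum.inr d', k =>
      (φ c' d' (k : K'.obj (op c', d')) : K.obj (op (p.obj c'), q.obj d'))
  | Sum.inr _, Sum.inl _, f => (f : PEmpty).elim
  | Sum.inr a, Sum.inr b, f => (q.map (f : a ⟶ b) : q.obj a ⟶ q.obj b)

variable (φnat : ∀ {c₁ c₂ : C'} {d₁ d₂ : D'} (f : c₂ ⟶ c₁) (g : d₁ ⟶ d₂)
  (k : K'.obj (op c₁, d₁)),
  φ c₂ d₂ (K'.map (f.op, g) k) = K.map ((p.map f).op, q.map g) (φ c₁ d₁ k))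

/-- The collage functor `Coll(K') ⥤ Coll(K)` induced by a strict morphism `(p, q, φ)` of
profunctors: it acts by `p` on `C'`-objects and morphisms, by `q` on `D'`-objects and
morphisms, and by `φ` on heteromorphisms. -/
def collageMap : Collage K' ⥤ Collage K where
  obj x := collageMapObj K' K p q x
  map {x y} f := collageMapMap K' K p q φ f
  map_id x := by
    match x with
    | Sum.inl c' => exact p.map_id c'
    | Sum.inr d' => exact q.map_id d'
  map_comp {x y z} f g := by
    match x, y, z, f, g with
    | Sum.inl a, Sum.inl b, Sum.inl c, f, g => exact p.map_comp (f : a ⟶ b) (g : b ⟶ c)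
    | Sum.inl a, Sum.inl b, Sum.inr d', f, k =>
      have h := φnat (f : a ⟶ b) (𝟙 d') (k : K'.obj (op b, d'))
      rw [q.map_id] at h
      exact h
    | Sum.inl a, Sum.inr d₁, Sum.inr d₂, k, g =>
      have h := φnat (𝟙 a) (g : d₁ ⟶ d₂) (k : K'.obj (op a, d₁))
      rw [p.map_id] at h
      exact h
    | Sum.inl _, Sum.inr _, Sum.inl _, _, g => exact (g : PEmpty).elim
    | Sum.inr _, Sum.inl _, _, f, _ => exact (f : PEmpty).elim
    | Sum.inr _, Sum.inr _, Sum.inl _, _, g => exact (g : PEmpty).elim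
    | Sum.inr a, Sum.inr b, Sum.inr c, f, g => exact q.map_comp (f : a ⟶ b) (g : b ⟶ c)

theorem collage_comp_eqToHom_het {c : C} {d₁ d₂ : D} (k : K.obj (op c, d₁))
    (h : @Eq (Collage K) (Sum.inr d₁) (Sum.inr d₂)) :
    @CategoryStruct.comp (Collage K) (collageCategory K).toCategoryStruct
      (Sum.inl c) (Sum.inr d₁) (Sum.inr d₂) k
      (@eqToHom (Collage K) (collageCategory K).toCategoryStruct _ _ h) =
    (K.map ((𝟙 (op c), eqToHom (Sum.inr.inj h)) : (op c, d₁) ⟶ (op c, d₂)) k :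
      K.obj (op c, d₂)) := by
  have h' : d₁ = d₂ := Sum.inr.inj h
  subst h'
  show K.map (𝟙 (op c), 𝟙 d₁) k = K.map (𝟙 (op c), eqToHom rfl) k
  rfl

theorem collage_comp_eqToHom_inl {c₁ c₂ c₃ : C} (f : c₁ ⟶ c₂)
    (h : @Eq (Collage K) (Sum.inl c₂) (Sum.inl c₃)) :
    @CategoryStruct.comp (Collage K) (collageCategory K).toCategoryStruct
      (Sum.inl c₁) (Sum.inl c₂) (Sum.inl c₃) f
      (@eqToHom (Collage K) (collageCategory K).toCategoryStruct _ _ h) =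
    (f ≫ eqToHom (Sum.inl.inj h) : c₁ ⟶ c₃) := by
  have h' : c₂ = c₃ := Sum.inl.inj h
  subst h'
  rfl

theorem collage_comp_eqToHom_inr {d₁ d₂ d₃ : D} (f : d₁ ⟶ d₂)
    (h : @Eq (Collage K) (Sum.inr d₂) (Sum.inr d₃)) :
    @CategoryStruct.comp (Collage K) (collageCategory K).toCategoryStruct
      (Sum.inr d₁) (Sum.inr d₂) (Sum.inr d₃) f
      (@eqToHom (Collage K) (collageCategory K).toCategoryStruct _ _ h) =
    (f ≫ eqToHom (Sum.inr.inj h) : d₁ ⟶ d₃) := by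
  have h' : d₂ = d₃ := Sum.inr.inj h
  subst h'
  rfl
theorem sigma_snd_eq {α : Type*} {F : α → Type*} {a : α} {x y : F a}
    (h : (⟨a, x⟩ : Σ a, F a) = ⟨a, y⟩) : x = y := by simpa using h

theorem sigma_eq_map {α : Type*} {β : Type*} {F : α → Type*} {G : β → Type*}
    (i : α → β) (j : ∀ a, F a → G (i a)) {a a' : α} {x : F a} {x' : F a'}
    (h : (⟨a, x⟩ : Σ a, F a) = ⟨a', x'⟩) :
    (⟨i a, j a x⟩ : Σ b, G b) = ⟨i a', j a' x'⟩ := by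
  cases h; rfl

/-- `(C', D', K', p, q, φ)` is a discrete opfibration over the profunctor `K` if and only if
the induced collage functor `Coll(K') ⥤ Coll(K)` is a discrete opfibration of categories. -/
theorem dopfOverProf_iff_collageMap_isDiscreteOpfib :
    (IsDiscreteOpfib p ∧ IsDiscreteOpfib q ∧
      ∀ (c' : C') (d : D) (k : K.obj (op (p.obj c'), d)),
        ∃! dk : Σ d' : D', K'.obj (op c', d'),
          ∃ h : q.obj dk.1 = d,
            K.map (𝟙 (op (p.obj c')), eqToHom h) (φ c' dk.1 dk.2) = k) ↔
      IsDiscreteOpfib (collageMap K' K p q φ @φnat) := by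
  constructor
  · rintro ⟨hp, hq, hφ⟩
    intro e b f
    match e, b, f with
    | Sum.inl c', Sum.inl c, f =>
      obtain ⟨⟨c₀, g₀⟩, ⟨h₀, hg₀⟩, hu⟩ := hp (f : p.obj c' ⟶ c)
      refine ⟨⟨Sum.inl c₀, g₀⟩, ⟨congrArg Sum.inl h₀, ?_⟩, ?_⟩
      · exact (collage_comp_eqToHom_inl K (p.map g₀) (congrArg Sum.inl h₀)).trans hg₀
      · rintro ⟨e₁, g₁⟩ ⟨h₁, hg₁⟩
        match e₁, g₁, h₁, hg₁ with
        | Sum.inl c₁, g₁, h₁, hg₁ =>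
          have := hu ⟨c₁, g₁⟩ ⟨Sum.inl.inj h₁,
            (collage_comp_eqToHom_inl K (p.map g₁) h₁).symm.trans hg₁⟩
          exact sigma_eq_map Sum.inl (fun a g => g) this
        | Sum.inr d₁, g₁, h₁, hg₁ => exact (Sum.inr_ne_inl (h₁ : (Sum.inr _ : C ⊕ D) = Sum.inl _)).elim
    | Sum.inl c', Sum.inr d, f =>
      obtain ⟨⟨d₀, k₀⟩, ⟨h₀, hk₀⟩, hu⟩ := hφ c' d (f : K.obj (op (p.obj c'), d))
      refine ⟨⟨Sum.inr d₀, k₀⟩, ⟨congrArg Sum.inr h₀, ?_⟩, ?_⟩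
      · exact (collage_comp_eqToHom_het K (φ c' d₀ k₀) (congrArg Sum.inr h₀)).trans hk₀
      · rintro ⟨e₁, k₁⟩ ⟨h₁, hk₁⟩
        match e₁, k₁, h₁, hk₁ with
        | Sum.inr d₁, k₁, h₁, hk₁ =>
          have := hu ⟨d₁, k₁⟩ ⟨Sum.inr.inj h₁,
            (collage_comp_eqToHom_het K (φ c' d₁ k₁) h₁).symm.trans hk₁⟩
          exact sigma_eq_map Sum.inr (fun a g => g) this
        | Sum.inl c₁, k₁, h₁, hk₁ => exact (Sum.inl_ne_inr (h₁ : (Sum.inl _ : C ⊕ D) = Sum.inr _)).elim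
    | Sum.inr d', Sum.inl c, f => exact (f : PEmpty).elim
    | Sum.inr d', Sum.inr d, f =>
      obtain ⟨⟨d₀, g₀⟩, ⟨h₀, hg₀⟩, hu⟩ := hq (f : q.obj d' ⟶ d)
      refine ⟨⟨Sum.inr d₀, g₀⟩, ⟨congrArg Sum.inr h₀, ?_⟩, ?_⟩
      · exact (collage_comp_eqToHom_inr K (q.map g₀) (congrArg Sum.inr h₀)).trans hg₀
      · rintro ⟨e₁, g₁⟩ ⟨h₁, hg₁⟩
        match e₁, g₁, h₁, hg₁ with
        | Sum.inr d₁, g₁, h₁, hg₁ =>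
          have := hu ⟨d₁, g₁⟩ ⟨Sum.inr.inj h₁,
            (collage_comp_eqToHom_inr K (q.map g₁) h₁).symm.trans hg₁⟩
          exact sigma_eq_map Sum.inr (fun a g => g) this
        | Sum.inl c₁, g₁, h₁, hg₁ => exact (Sum.inl_ne_inr (h₁ : (Sum.inl _ : C ⊕ D) = Sum.inr _)).elim
  · intro hopf
    refine ⟨?_, ?_, ?_⟩
    · intro c' c f
      obtain ⟨⟨e₀, g₀⟩, ⟨h₀, hg₀⟩, hu⟩ :=
        hopf (e := Sum.inl c') (b := Sum.inl c) f
      match e₀, g₀, h₀, hg₀, hu with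
      | Sum.inl c₀, g₀, h₀, hg₀, hu =>
        refine ⟨⟨c₀, g₀⟩, ⟨Sum.inl.inj h₀, ?_⟩, ?_⟩
        · exact (collage_comp_eqToHom_inl K (p.map g₀) h₀).symm.trans hg₀
        · rintro ⟨c₁, g₁⟩ ⟨h₁, hg₁⟩
          have := hu ⟨Sum.inl c₁, g₁⟩ ⟨congrArg Sum.inl h₁,
            (collage_comp_eqToHom_inl K (p.map g₁) (congrArg Sum.inl h₁)).trans hg₁⟩
          have h2 : c₁ = c₀ := Sum.inl.inj (congrArg Sigma.fst this)
          subst h2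
          rw [sigma_snd_eq this]
      | Sum.inr d₀, g₀, h₀, hg₀, hu => exact (Sum.inr_ne_inl (h₀ : (Sum.inr _ : C ⊕ D) = Sum.inl _)).elim
    · intro d' d f
      obtain ⟨⟨e₀, g₀⟩, ⟨h₀, hg₀⟩, hu⟩ :=
        hopf (e := Sum.inr d') (b := Sum.inr d) f
      match e₀, g₀, h₀, hg₀, hu with
      | Sum.inr d₀, g₀, h₀, hg₀, hu =>
        refine ⟨⟨d₀, g₀⟩, ⟨Sum.inr.inj h₀, ?_⟩, ?_⟩
        · exact (collage_comp_eqToHom_inr K (q.map g₀) h₀).symm.trans hg₀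
        · rintro ⟨d₁, g₁⟩ ⟨h₁, hg₁⟩
          have := hu ⟨Sum.inr d₁, g₁⟩ ⟨congrArg Sum.inr h₁,
            (collage_comp_eqToHom_inr K (q.map g₁) (congrArg Sum.inr h₁)).trans hg₁⟩
          have h2 : d₁ = d₀ := Sum.inr.inj (congrArg Sigma.fst this)
          subst h2
          rw [sigma_snd_eq this]
      | Sum.inl c₀, g₀, h₀, hg₀, hu => exact (Sum.inl_ne_inr (h₀ : (Sum.inl _ : C ⊕ D) = Sum.inr _)).elim
    · intro c' d k
      obtain ⟨⟨e₀, k₀⟩, ⟨h₀, hk₀⟩, hu⟩ :=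
        hopf (e := Sum.inl c') (b := Sum.inr d) k
      match e₀, k₀, h₀, hk₀, hu with
      | Sum.inr d₀, k₀, h₀, hk₀, hu =>
        refine ⟨⟨d₀, k₀⟩, ⟨Sum.inr.inj h₀, ?_⟩, ?_⟩
        · exact (collage_comp_eqToHom_het K (φ c' d₀ k₀) h₀).symm.trans hk₀
        · rintro ⟨d₁, k₁⟩ ⟨h₁, hk₁⟩
          have := hu ⟨Sum.inr d₁, k₁⟩ ⟨congrArg Sum.inr h₁,
            (collage_comp_eqToHom_het K (φ c' d₁ k₁) (congrArg Sum.inr h₁)).trans hk₁⟩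
          have h2 : d₁ = d₀ := Sum.inr.inj (congrArg Sigma.fst this)
          subst h2
          rw [sigma_snd_eq this]
      | Sum.inl c₀, k₀, h₀, hk₀, hu => exact (Sum.inl_ne_inr (h₀ : (Sum.inl _ : C ⊕ D) = Sum.inr _)).elim

end CollageMap
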